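/- arXiv:2307.15930 — 3 statements merged into one kernel-verified Lean document; each statement's English description precedes it below -/
import Mathlib

section
/- Let A be a type equipped with an independence relation I : A → A → Prop that is symmetric and irreflexive, and let ~ be the swap-equivalence on List A. Then for all lists l, l' over A, l ~ l' holds if and only if l and l' have the same length and there exists a bijection σ : Fin l.length ≃ Fin l.length such that (i) for every position i, the letter of l' at position σ i equals the letter of l at position i, and (ii) for all positions i < j such that the letters of l at positions i and j are dependent (i.e., ¬ I (l.get i) (l.get j)), one has σ i < σ j. In other words, two execution sequences are swap-equivalent exactly when one is obtained from the other by a permutation of events that preserves the relative order of every pair of dependent events (i.e., they have the same happens-before trace). -/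
/-- One swap step: exchange two adjacent independent letters. -/
def SwapStep {A : Type*} (I : A → A → Prop) (l l' : List A) : Prop :=
  ∃ (u v : List A) (a b : A), I a b ∧ l = u ++ a :: b :: v ∧ l' = u ++ b :: a :: v

/-- Swap-equivalence: the smallest equivalence relation containing `SwapStep I`. -/
def SwapEquiv {A : Type*} (I : A → A → Prop) : List A → List A → Prop :=
  Relation.EqvGen (SwapStep I)

section AuxTrace
variable {A : Type*}
variable {A : Type*}

def tp (m k : ℕ) : ℕ := if k = m then m+1 else if k = m+1 then m else k

theorem tp_tp (m k : ℕ) : tp m (tp m k) = k := by unfold tp; split_ifs <;> omega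

theorem tp_lt {m k n : ℕ} (hm : m + 1 < n) (hk : k < n) : tp m k < n := by
  unfold tp; split_ifs <;> omega

theorem getElem?_swap (u v : List A) (a b : A) (k : ℕ) :
    (u ++ b :: a :: v)[k]? = (u ++ a :: b :: v)[tp u.length k]? := by
  unfold tp; split_ifs with h1 h2
  · subst h1
    rw [List.getElem?_append_right (le_refl _), List.getElem?_append_right (by omega)]
    simp
  · subst h2
    rw [List.getElem?_append_right (by omega), List.getElem?_append_right (le_refl _)]
    simp
  · rcases Nat.lt_or_ge k u.length with h | h
    · rw [List.getElem?_append_left h, List.getElem?_append_left h]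
    · rw [List.getElem?_append_right h, List.getElem?_append_right h]
      have : k - u.length = (k - u.length - 2) + 2 := by omega
      rw [this]; simp

def OP (I : A → A → Prop) (l l' : List A) : Prop :=
  l.length = l'.length ∧ ∃ f g : ℕ → ℕ,
    (∀ k, k < l.length → f k < l.length) ∧
    (∀ k, k < l.length → g k < l.length) ∧
    (∀ k, k < l.length → g (f k) = k) ∧
    (∀ k, k < l.length → f (g k) = k) ∧
    (∀ k, k < l.length → l'[f k]? = l[k]?) ∧
    (∀ i j, ∀ hj : j < l.length, ∀ hij : i < j,
       ¬ I (l[i]'(lt_trans hij hj)) (l[j]'hj) → f i < f j)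

theorem op_of_swapStep {I : A → A → Prop} {l l' : List A} (h : SwapStep I l l') :
    OP I l l' := by
  obtain ⟨u, v, a, b, hab, hl, hl'⟩ := h
  subst hl hl'
  have hm : u.length + 1 < (u ++ a :: b :: v).length := by simp only [List.length_append, List.length_cons]; omega
  have hlen : ∀ k, (u ++ a :: b :: v)[tp u.length k]? = (u ++ b :: a :: v)[k]? :=
    fun k => (getElem?_swap u v a b k).symm
  refine ⟨by simp, tp u.length, tp u.length, fun k hk => tp_lt hm hk,
    fun k hk => tp_lt hm hk, fun k _ => tp_tp _ k, fun k _ => tp_tp _ k, ?_, ?_⟩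
  · intro k hk
    rw [getElem?_swap u v a b (tp u.length k), tp_tp]
  · intro i j hj hij hdep
    by_cases hc : i = u.length ∧ j = u.length + 1
    · exfalso
      obtain ⟨hi', hj'⟩ := hc
      have ha : (u ++ a :: b :: v)[i]'(lt_trans hij hj) = a := by
        have : (u ++ a :: b :: v)[i]? = some a := by
          subst hi'; rw [List.getElem?_append_right (le_refl _)]; simp
        simpa [List.getElem?_eq_getElem (lt_trans hij hj)] using this
      have hb : (u ++ a :: b :: v)[j]'hj = b := by
        have : (u ++ a :: b :: v)[j]? = some b := by
          subst hj'; rw [List.getElem?_append_right (by omega)]; simp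
        simpa [List.getElem?_eq_getElem hj] using this
      rw [ha, hb] at hdep; exact hdep hab
    · unfold tp; split_ifs <;> omega

theorem getElem_eq_of_getElem? {l l' : List A} {i j : ℕ} (hi : i < l.length)
    (hj : j < l'.length) (h : l[i]? = l'[j]?) : l[i]'hi = l'[j]'hj := by
  rw [List.getElem?_eq_getElem hi, List.getElem?_eq_getElem hj] at h
  exact Option.some_injective _ h

theorem op_symm {I : A → A → Prop} (hsymm : ∀ a b, I a b → I b a) {l l' : List A}
    (h : OP I l l') : OP I l' l := by
  obtain ⟨hlen, f, g, hf, hg, hgf, hfg, hget, hord⟩ := h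
  rw [hlen] at hf hg hgf hfg
  refine ⟨hlen.symm, g, f, fun k hk => hlen ▸ hg k hk, fun k hk => hlen ▸ hf k hk,
    hfg, hgf, ?_, ?_⟩
  · intro k hk
    have h1 := hget (g k) (hlen ▸ hg k hk)
    rw [hfg k hk] at h1
    exact h1.symm
  · intro i j hj hij hdep
    have hi := lt_trans hij hj
    have hgi := hg i hi
    have hgj := hg j hj
    have e1 : l[g i]'(hlen ▸ hgi) = l'[i]'hi := by
      have := hget (g i) (hlen ▸ hgi)
      rw [hfg i hi] at this
      exact (getElem_eq_of_getElem? _ _ this.symm)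
    have e2 : l[g j]'(hlen ▸ hgj) = l'[j]'hj := by
      have := hget (g j) (hlen ▸ hgj)
      rw [hfg j hj] at this
      exact (getElem_eq_of_getElem? _ _ this.symm)
    rcases Nat.lt_trichotomy (g i) (g j) with h | h | h
    · exact h
    · exfalso
      have : i = j := by
        have := congrArg f h
        simpa [hfg i hi, hfg j hj] using this
      omega
    · exfalso
      have hdep' : ¬ I (l[g j]'(hlen ▸ hgj)) (l[g i]'(hlen ▸ hgi)) := by
        rw [e1, e2]; intro hI; exact hdep (hsymm _ _ hI)
      have := hord (g j) (g i) (hlen ▸ hgi) h hdep'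
      rw [hfg i hi, hfg j hj] at this
      omega

theorem op_trans {I : A → A → Prop} {l l' l'' : List A}
    (h1 : OP I l l') (h2 : OP I l' l'') : OP I l l'' := by
  obtain ⟨e1, f1, g1, hf1, hg1, hgf1, hfg1, hget1, hord1⟩ := h1
  obtain ⟨e2, f2, g2, hf2, hg2, hgf2, hfg2, hget2, hord2⟩ := h2
  rw [← e1] at hf2 hg2 hgf2 hfg2
  refine ⟨e1.trans e2, f2 ∘ f1, g1 ∘ g2, fun k hk => hf2 _ (hf1 k hk),
    fun k hk => hg1 _ (hg2 k hk), fun k hk => by simp [hgf2 _ (hf1 k hk), hgf1 k hk],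
    fun k hk => by simp [hfg1 _ (hg2 k hk), hfg2 k hk], ?_, ?_⟩
  · intro k hk
    have := hget2 (f1 k) (e1 ▸ hf1 k hk)
    simp only [Function.comp_apply, this, hget1 k hk]
  · intro i j hj hij hdep
    have hi := lt_trans hij hj
    have hij1 := hord1 i j hj hij hdep
    have hdep' : ¬ I (l'[f1 i]'(e1 ▸ hf1 i hi)) (l'[f1 j]'(e1 ▸ hf1 j hj)) := by
      have ei := getElem_eq_of_getElem? (e1 ▸ hf1 i hi) hi (hget1 i hi)
      have ej := getElem_eq_of_getElem? (e1 ▸ hf1 j hj) hj (hget1 j hj)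
      rw [ei, ej]; exact hdep
    exact hord2 (f1 i) (f1 j) (e1 ▸ hf1 j hj) hij1 hdep'

theorem op_refl (I : A → A → Prop) (l : List A) : OP I l l := by
  refine ⟨rfl, id, id, ?_⟩
  simp [id]
  intros; omega

theorem op_of_swapEquiv {I : A → A → Prop} (hsymm : ∀ a b, I a b → I b a)
    {l l' : List A} (h : SwapEquiv I l l') : OP I l l' := by
  induction h with
  | rel _ _ hstep => exact op_of_swapStep hstep
  | refl x => exact op_refl I x
  | symm _ _ _ ih => exact op_symm hsymm ih
  | trans _ _ _ _ _ ih1 ih2 => exact op_trans ih1 ih2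

def invCount (f : ℕ → ℕ) (n : ℕ) : ℕ :=
  ((Finset.range n ×ˢ Finset.range n).filter fun p => p.1 < p.2 ∧ f p.2 < f p.1).card

theorem invCount_swap_lt {f : ℕ → ℕ} {n m : ℕ} (hm : m + 1 < n) (hdes : f (m+1) < f m) :
    invCount (fun k => f (tp m k)) n < invCount f n := by
  classical
  have htm : tp m m = m + 1 := by unfold tp; simp
  have htm1 : tp m (m+1) = m := by unfold tp; split_ifs <;> omega
  set S := (Finset.range n ×ˢ Finset.range n).filter fun p => p.1 < p.2 ∧ f p.2 < f p.1
    with hS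
  set S₂ := (Finset.range n ×ˢ Finset.range n).filter
    fun p => p.1 < p.2 ∧ f (tp m p.2) < f (tp m p.1) with hS2
  have hmem : (m, m+1) ∈ S := by
    simp only [hS, Finset.mem_filter, Finset.mem_product, Finset.mem_range]
    exact ⟨⟨by omega, hm⟩, by omega, hdes⟩
  have hcard : S₂.card ≤ (S.erase (m, m+1)).card := by
    apply Finset.card_le_card_of_injOn (fun p => (tp m p.1, tp m p.2))
    · intro p hp
      simp only [Finset.mem_coe, hS2, Finset.mem_filter, Finset.mem_product, Finset.mem_range] at hp
      obtain ⟨⟨hp1, hp2⟩, hlt, hfp⟩ := hp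
      have hne : ¬ (p.1 = m ∧ p.2 = m + 1) := by
        rintro ⟨e1, e2⟩
        rw [e1, e2, htm, htm1] at hfp
        omega
      rw [Finset.mem_coe, Finset.mem_erase]
      constructor
      · intro hcontra
        have h1 : tp m p.1 = m := congrArg Prod.fst hcontra
        have h2 : tp m p.2 = m + 1 := congrArg Prod.snd hcontra
        have h1' : p.1 = m + 1 := by rw [← tp_tp m p.1, h1, htm]
        have h2' : p.2 = m := by rw [← tp_tp m p.2, h2, htm1]
        omega
      · simp only [hS, Finset.mem_filter, Finset.mem_product, Finset.mem_range]
        refine ⟨⟨tp_lt hm hp1, tp_lt hm hp2⟩, ?_, hfp⟩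
        unfold tp; split_ifs <;> omega
    · intro p hp q hq heq
      have h1 : tp m p.1 = tp m q.1 := congrArg Prod.fst heq
      have h2 : tp m p.2 = tp m q.2 := congrArg Prod.snd heq
      have e1 : p.1 = q.1 := by rw [← tp_tp m p.1, h1, tp_tp]
      have e2 : p.2 = q.2 := by rw [← tp_tp m p.2, h2, tp_tp]
      exact Prod.ext e1 e2
  calc S₂.card ≤ (S.erase (m, m+1)).card := hcard
    _ < S.card := Finset.card_erase_lt_of_mem hmem

theorem take_getElem_getElem_drop (l : List A) (m : ℕ) (h : m + 1 < l.length) :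
    l = l.take m ++ l[m] :: l[m+1] :: l.drop (m+2) := by
  rw [← List.drop_eq_getElem_cons (by omega), ← List.drop_eq_getElem_cons (by omega),
    List.take_append_drop]

theorem swapEquiv_of_op_aux {I : A → A → Prop} (hsymm : ∀ a b, I a b → I b a) :
    ∀ N (l l' : List A) (f g : ℕ → ℕ),
    l.length = l'.length →
    (∀ k, k < l.length → f k < l.length) →
    (∀ k, k < l.length → g k < l.length) →
    (∀ k, k < l.length → g (f k) = k) →
    (∀ k, k < l.length → f (g k) = k) →
    (∀ k, k < l.length → l'[f k]? = l[k]?) →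
    (∀ i j, ∀ hj : j < l.length, ∀ hij : i < j,
       ¬ I (l[i]'(lt_trans hij hj)) (l[j]'hj) → f i < f j) →
    invCount f l.length < N → SwapEquiv I l l' := by
  intro N
  induction N with
  | zero => intro _ _ _ _ _ _ _ _ _ _ _ hinv; omega
  | succ N ih =>
    intro l l' f g hlen hf hg hgf hfg hget hord hinv
    set n := l.length with hn
    by_cases hdesc : ∃ m, m + 1 < n ∧ f (m+1) < f m
    · obtain ⟨m, hm, hdes⟩ := hdesc
      have hm0 : m < n := by omega
      have hI : I (l[m]'hm0) (l[m+1]'hm) := by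
        by_contra hnI
        have := hord m (m+1) hm (by omega) hnI
        omega
      set a := l[m]'hm0 with ha
      set b := l[m+1]'hm with hb
      have hkey : l = l.take m ++ a :: b :: l.drop (m+2) := take_getElem_getElem_drop l m hm
      set l₂ := l.take m ++ b :: a :: l.drop (m+2) with hl₂
      have hstep : SwapStep I l l₂ := ⟨l.take m, l.drop (m+2), a, b, hI, hkey, rfl⟩
      have htake : (l.take m).length = m := by
        rw [List.length_take]; omega
      have hlen2 : l₂.length = n := by
        rw [hl₂]; conv_rhs => rw [hn, hkey]
        simp
      have hl2get : ∀ k, l₂[k]? = l[tp m k]? := by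
        intro k
        rw [hl₂]
        rw [getElem?_swap (l.take m) (l.drop (m+2)) a b k, htake]
        conv_rhs => rw [hkey]
      have h2 : SwapEquiv I l₂ l' := by
        apply ih l₂ l' (fun k => f (tp m k)) (fun k => tp m (g k))
          (hlen2.trans hlen)
        · intro k hk
          rw [hlen2] at hk ⊢
          exact hf _ (tp_lt hm hk)
        · intro k hk
          rw [hlen2] at hk ⊢
          exact tp_lt hm (hg k hk)
        · intro k hk
          rw [hlen2] at hk
          rw [hgf _ (tp_lt hm hk), tp_tp]
        · intro k hk
          rw [hlen2] at hk
          rw [tp_tp, hfg k hk]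
        · intro k hk
          rw [hlen2] at hk
          rw [hget _ (tp_lt hm hk), hl2get]
        · intro i j hj hij hdep
          rw [hlen2] at hj
          have hi : i < n := lt_trans hij hj
          by_cases hc : i = m ∧ j = m + 1
          · exfalso
            obtain ⟨e1, e2⟩ := hc
            have eb : l₂[i]'(by omega) = b := by
              apply getElem_eq_of_getElem? _ hm
              rw [hl2get, e1, show tp m m = m + 1 by unfold tp; simp]
            have ea : l₂[j]'(by rw [hlen2]; omega) = a := by
              apply getElem_eq_of_getElem? _ hm0
              rw [hl2get, e2, show tp m (m+1) = m by unfold tp; split_ifs <;> omega]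
            rw [eb, ea] at hdep
            exact hdep (hsymm _ _ hI)
          · have htpij : tp m i < tp m j := by
              unfold tp; split_ifs <;> omega
            have hdep' : ¬ I (l[tp m i]'(tp_lt hm hi)) (l[tp m j]'(tp_lt hm hj)) := by
              have ei : l₂[i]'(by rw [hlen2]; omega) = l[tp m i]'(tp_lt hm hi) :=
                getElem_eq_of_getElem? _ _ (hl2get i)
              have ej : l₂[j]'(by rw [hlen2]; omega) = l[tp m j]'(tp_lt hm hj) :=
                getElem_eq_of_getElem? _ _ (hl2get j)
              rw [← ei, ← ej]; exact hdep
            exact hord (tp m i) (tp m j) (tp_lt hm hj) htpij hdep'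
        · rw [hlen2]
          have h1 : invCount (fun k => f (tp m k)) n < invCount f n :=
            invCount_swap_lt hm hdes
          omega
      exact Relation.EqvGen.trans l l₂ l' (Relation.EqvGen.rel l l₂ hstep) h2
    · push_neg at hdesc
      have hadj : ∀ m, m + 1 < n → f m < f (m+1) := by
        intro m hm
        have hle := hdesc m hm
        rcases lt_or_eq_of_le hle with h | h
        · exact h
        · exfalso
          have := congrArg g h
          rw [hgf m (by omega), hgf (m+1) hm] at this
          omega
      have grow : ∀ d i, i + d < n → f i + d ≤ f (i + d) := by
        intro d
        induction d with
        | zero => intro i _; simp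
        | succ d ihd =>
          intro i hi
          have h1 := ihd i (by omega)
          have h2 := hadj (i + d) (by omega)
          have h3 : i + (d + 1) = (i + d) + 1 := by omega
          rw [h3]
          omega
      have hfid : ∀ k, k < n → f k = k := by
        intro k hk
        have h1 : f 0 + k ≤ f k := by
          have := grow k 0 (by omega)
          rwa [Nat.zero_add] at this
        have h2 : f k + (n - 1 - k) ≤ f (n - 1) := by
          have := grow (n - 1 - k) k (by omega)
          rwa [show k + (n - 1 - k) = n - 1 by omega] at this
        have h3 : f (n-1) < n := hf (n-1) (by omega)
        omega
      have heq : l = l' := by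
        apply List.ext_getElem?
        intro i
        by_cases hi : i < n
        · rw [← hget i hi, hfid i hi]
        · rw [List.getElem?_eq_none (by omega), List.getElem?_eq_none (by rw [← hlen]; omega)]
      rw [heq]
      exact Relation.EqvGen.refl l'

theorem swapEquiv_of_op {I : A → A → Prop} (hsymm : ∀ a b, I a b → I b a)
    {l l' : List A} (h : OP I l l') : SwapEquiv I l l' := by
  obtain ⟨hlen, f, g, hf, hg, hgf, hfg, hget, hord⟩ := h
  exact swapEquiv_of_op_aux hsymm (invCount f l.length + 1) l l' f g hlen hf hg hgf hfg
    hget hord (by omega)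

theorem swapEquiv_iff_op_aux {A : Type*}
    (I : A → A → Prop) (hsymm : ∀ a b, I a b → I b a) (hirr : ∀ a, ¬ I a a)
    (l l' : List A) :
    SwapEquiv I l l' ↔
      ∃ h : l.length = l'.length, ∃ σ : Fin l.length ≃ Fin l.length,
        (∀ i : Fin l.length, l'.get (Fin.cast h (σ i)) = l.get i) ∧
        (∀ i j : Fin l.length, i < j → ¬ I (l.get i) (l.get j) → σ i < σ j) := by
  constructor
  · intro h
    obtain ⟨hlen, f, g, hf, hg, hgf, hfg, hget, hord⟩ := op_of_swapEquiv hsymm h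
    refine ⟨hlen, ⟨fun i => ⟨f i, hf i i.2⟩, fun i => ⟨g i, hg i i.2⟩,
      fun i => Fin.ext (hgf i i.2), fun i => Fin.ext (hfg i i.2)⟩, ?_, ?_⟩
    · intro i
      simp only [List.get_eq_getElem, Fin.coe_cast, Equiv.coe_fn_mk]
      exact getElem_eq_of_getElem? _ _ (hget i.1 i.2)
    · intro i j hij hdep
      simp only [List.get_eq_getElem] at hdep
      exact hord i.1 j.1 j.2 hij hdep
  · rintro ⟨h, σ, c1, c2⟩
    apply swapEquiv_of_op hsymm
    refine ⟨h, fun k => if hk : k < l.length then (σ ⟨k, hk⟩).1 else k,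
      fun k => if hk : k < l.length then (σ.symm ⟨k, hk⟩).1 else k, ?_, ?_, ?_, ?_, ?_, ?_⟩
    · intro k hk; dsimp only; rw [dif_pos hk]; exact (σ ⟨k, hk⟩).2
    · intro k hk; dsimp only; rw [dif_pos hk]; exact (σ.symm ⟨k, hk⟩).2
    · intro k hk
      dsimp only
      rw [dif_pos hk, dif_pos (σ ⟨k, hk⟩).2]
      simp
    · intro k hk
      dsimp only
      rw [dif_pos hk, dif_pos (σ.symm ⟨k, hk⟩).2]
      simp
    · intro k hk
      dsimp only
      rw [dif_pos hk]
      have := c1 ⟨k, hk⟩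
      simp only [List.get_eq_getElem, Fin.coe_cast] at this
      rw [List.getElem?_eq_getElem (h ▸ (σ ⟨k, hk⟩).2), List.getElem?_eq_getElem hk, this]
    · intro i j hj hij hdep
      dsimp only
      rw [dif_pos hj, dif_pos (lt_trans hij hj)]
      have := c2 ⟨i, lt_trans hij hj⟩ ⟨j, hj⟩ hij (by
        simp only [List.get_eq_getElem]; exact hdep)
      exact this

end AuxTrace

theorem swapEquiv_iff_exists_order_preserving_bijection {A : Type*}
    (I : A → A → Prop) (hsymm : ∀ a b, I a b → I b a) (hirr : ∀ a, ¬ I a a)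
    (l l' : List A) :
    SwapEquiv I l l' ↔
      ∃ h : l.length = l'.length, ∃ σ : Fin l.length ≃ Fin l.length,
        (∀ i : Fin l.length, l'.get (Fin.cast h (σ i)) = l.get i) ∧
        (∀ i j : Fin l.length, i < j → ¬ I (l.get i) (l.get j) → σ i < σ j) :=
  swapEquiv_iff_op_aux I hsymm hirr l l'
end

section
/- Let X be a finite type of events with msg : X → M (M finite, msg surjective) and hdl : M → H, and let R be a relation on X. Then there exists a serialized strict linear order on X extending R if and only if there exists a relation < on M that is a strict total order on the messages of each handler (i.e., for any two distinct messages p, q with hdl p = hdl q, exactly one of p < q, q < p holds, and < is transitive and irreflexive on each such fiber) such that the relation R ∪ { (e, e') | hdl (msg e) = hdl (msg e') and msg e < msg e' } is acyclic. (This is the key combinatorial equivalence underlying the paper's NP-membership argument for event-driven consistency: a happens-before graph is realizable by a serialized execution exactly when some per-handler total order on its messages, added to the happens-before edges, yields an acyclic relation.) -/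
/-- A strict linear order `L` on events is serialized if no event of another
message on the same handler can occur strictly between two events of one message. -/
def Serialized {X M H : Type*} (msg : X → M) (hdl : M → H)
    (L : X → X → Prop) : Prop :=
  ∀ e1 e2 e' : X, msg e1 = msg e2 → msg e' ≠ msg e1 →
    hdl (msg e') = hdl (msg e1) → ¬ (L e1 e' ∧ L e' e2)

/-- A relation is acyclic if its transitive closure is irreflexive. -/
def RelAcyclic {X : Type*} (R : X → X → Prop) : Prop :=
  Irreflexive (Relation.TransGen R)

theorem exists_serialized_linearization_iff {X M H : Type*} [Fintype X] [Fintype M]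
    (msg : X → M) (hdl : M → H) (hsurj : Function.Surjective msg)
    (R : X → X → Prop) :
    (∃ L : X → X → Prop, IsStrictTotalOrder X L ∧ Serialized msg hdl L ∧
        ∀ e e' : X, R e e' → L e e') ↔
      (∃ lt : M → M → Prop,
        (∀ p q : M, p ≠ q → hdl p = hdl q → Xor' (lt p q) (lt q p)) ∧
        (∀ p q r : M, hdl p = hdl q → hdl q = hdl r →
          lt p q → lt q r → lt p r) ∧
        (∀ p : M, ¬ lt p p) ∧
        RelAcyclic (fun e e' : X => R e e' ∨
          (hdl (msg e) = hdl (msg e') ∧ lt (msg e) (msg e')))) := by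
  constructor
  · rintro ⟨L, hL, hser, hext⟩
    haveI := hL
    have hasymm : ∀ a b : X, L a b → ¬ L b a := fun a b h h' =>
      (irrefl_of L a) (trans_of L h h')
    -- key: if one event of p precedes one event of q (p ≠ q, same handler),
    -- then every event of p precedes every event of q
    have key : ∀ p q : M, p ≠ q → hdl p = hdl q → ∀ e e' : X, msg e = p → msg e' = q →
        L e e' → ∀ f f' : X, msg f = p → msg f' = q → L f f' := by
      intro p q hpq hh e e' he he' hlee f f' hf hf'
      have hfe' : ∀ g : X, msg g = p → L g e' := by
        intro g hg
        have hne : msg e' ≠ msg e := by rw [he', he]; exact fun h => hpq h.symm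
        have hs := hser e g e' (he.trans hg.symm) hne
          (by rw [he', he]; exact hh.symm)
        rcases trichotomous_of L g e' with h | h | h
        · exact h
        · exfalso; apply hpq; rw [← hg, h, he']
        · exact absurd h (fun h2 => hs ⟨hlee, h2⟩)
      have hLfe' := hfe' f hf
      have hs2 := hser f' e' f (hf'.trans he'.symm)
        (by rw [hf, hf']; exact hpq) (by rw [hf, hf']; exact hh)
      rcases trichotomous_of L f f' with h | h | h
      · exact h
      · exfalso; apply hpq; rw [← hf, h, hf']
      · exact absurd h (fun h2 => hs2 ⟨h2, hLfe'⟩)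
    refine ⟨fun p q => p ≠ q ∧ hdl p = hdl q ∧ ∀ e e' : X, msg e = p → msg e' = q → L e e',
      ?_, ?_, ?_, ?_⟩
    · intro p q hpq hh
      obtain ⟨e, he⟩ := hsurj p
      obtain ⟨e', he'⟩ := hsurj q
      rcases trichotomous_of L e e' with h | h | h
      · left
        refine ⟨⟨hpq, hh, key p q hpq hh e e' he he' h⟩, ?_⟩
        rintro ⟨_, _, hall⟩
        exact hasymm e e' h (hall e' e he' he)
      · exfalso; apply hpq; rw [← he, h, he']
      · right
        refine ⟨⟨hpq.symm, hh.symm, key q p hpq.symm hh.symm e' e he' he h⟩, ?_⟩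
        rintro ⟨_, _, hall⟩
        exact hasymm e' e h (hall e e' he he')
    · rintro p q r hpq hqr ⟨hne1, hh1, h1⟩ ⟨hne2, hh2, h2⟩
      obtain ⟨eq', heq⟩ := hsurj q
      have hall : ∀ e e' : X, msg e = p → msg e' = r → L e e' := fun e e' he he' =>
        trans_of L (h1 e eq' he heq) (h2 eq' e' heq he')
      have hner : p ≠ r := by
        rintro rfl
        obtain ⟨e, he⟩ := hsurj p
        exact irrefl_of L e (hall e e he he)
      exact ⟨hner, hh1.trans hh2, hall⟩
    · rintro p ⟨hne, _⟩; exact hne rfl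
    · intro e he
      have hsub : ∀ a b : X, (R a b ∨ (hdl (msg a) = hdl (msg b) ∧
          (msg a ≠ msg b ∧ hdl (msg a) = hdl (msg b) ∧
            ∀ f f' : X, msg f = msg a → msg f' = msg b → L f f'))) → L a b := by
        rintro a b (h | ⟨_, _, _, hall⟩)
        · exact hext a b h
        · exact hall a b rfl rfl
      have h2 : Relation.TransGen L e e := Relation.TransGen.mono hsub e e he
      have htL : Transitive L := fun a b c hab hbc => trans_of L hab hbc
      rw [Relation.transGen_eq_self] at h2
      exact irrefl_of L e h2
  · rintro ⟨lt, hxor, htr, hirr, hacyc⟩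
    set S : X → X → Prop := fun e e' => R e e' ∨
      (hdl (msg e) = hdl (msg e') ∧ lt (msg e) (msg e')) with hS
    let r : X → X → Prop := fun a b => Relation.TransGen S a b ∨ a = b
    haveI hrefl : IsRefl X r := ⟨fun a => Or.inr rfl⟩
    haveI hrtrans : IsTrans X r := by
      constructor
      rintro a b c (h | rfl) (h' | rfl)
      · exact Or.inl (h.trans h')
      · exact Or.inl h
      · exact Or.inl h'
      · exact Or.inr rfl
    haveI hanti : IsAntisymm X r := by
      constructor
      rintro a b (h | rfl) (h' | h')
      · exact absurd (h.trans h') (hacyc a)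
      · exact h'.symm
      · rfl
      · rfl
    haveI hpo : IsPartialOrder X r := {}
    obtain ⟨s, hlin, hrs⟩ := extend_partialOrder r
    haveI := hlin
    have hS_s : ∀ a b : X, S a b → s a b ∧ a ≠ b := by
      intro a b hab
      refine ⟨hrs a b (Or.inl (Relation.TransGen.single hab)), ?_⟩
      rintro rfl
      exact hacyc a (Relation.TransGen.single hab)
    refine ⟨fun a b => s a b ∧ a ≠ b, ?_, ?_, ?_⟩
    · haveI h1 : IsTrichotomous X (fun a b => s a b ∧ a ≠ b) := by
        constructor
        intro a b hn1 hn2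
        by_contra hab
        rcases total_of s a b with h | h
        · exact hn1 ⟨h, hab⟩
        · exact hn2 ⟨h, Ne.symm hab⟩
      haveI h2 : IsIrrefl X (fun a b => s a b ∧ a ≠ b) :=
        ⟨by rintro a ⟨_, h⟩; exact h rfl⟩
      haveI h3 : IsTrans X (fun a b => s a b ∧ a ≠ b) := by
        constructor
        rintro a b c ⟨hab, hne⟩ ⟨hbc, hne'⟩
        refine ⟨trans_of s hab hbc, ?_⟩
        rintro rfl
        exact hne (antisymm_of s hab hbc)
      exact {}
    · rintro e1 e2 e' h12 hne hh ⟨⟨h1, hne1⟩, ⟨h2, hne2⟩⟩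
      rcases hxor (msg e1) (msg e') (fun h => hne h.symm) hh.symm with ⟨hlt, _⟩ | ⟨hlt, _⟩
      · have hS2 : S e2 e' := Or.inr ⟨h12 ▸ hh.symm, h12 ▸ hlt⟩
        obtain ⟨hs2, _⟩ := hS_s _ _ hS2
        exact hne2 (antisymm_of s h2 hs2)
      · have hS1 : S e' e1 := Or.inr ⟨hh, hlt⟩
        obtain ⟨hs1, _⟩ := hS_s _ _ hS1
        exact hne1 (antisymm_of s h1 hs1)
    · intro e e' hR
      exact hS_s e e' (Or.inl hR)
end

section
/- Let X be a finite type of events with msg : X → M (M finite, msg surjective) and hdl : M → H, and let L be a serialized strict linear order on X. Define a relation < on messages by p < q iff p ≠ q, hdl p = hdl q, and every event of p L-precedes every event of q. Then for any two distinct messages p, q with hdl p = hdl q, exactly one of p < q or q < p holds, and < is transitive on the messages of each handler; that is, < is a strict total order on the messages of each handler. In particular, in any serialized execution the messages processed by each handler are executed in some sequential order, one after the other. -/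
/-- The induced order on messages: `p` precedes `q` if they are distinct messages
on the same handler and every event of `p` `L`-precedes every event of `q`. -/
def MsgLt {X M H : Type*} (msg : X → M) (hdl : M → H) (L : X → X → Prop)
    (p q : M) : Prop :=
  p ≠ q ∧ hdl p = hdl q ∧ ∀ e e' : X, msg e = p → msg e' = q → L e e'

theorem serialized_induces_total_order_on_handler_messages
    {X M H : Type*} [Fintype X] [Fintype M]
    (msg : X → M) (hdl : M → H) (hsurj : Function.Surjective msg)
    (L : X → X → Prop) (hL : IsStrictTotalOrder X L)
    (hser : Serialized msg hdl L) :
    (∀ p q : M, p ≠ q → hdl p = hdl q →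
      Xor' (MsgLt msg hdl L p q) (MsgLt msg hdl L q p)) ∧
    (∀ p q r : M, hdl p = hdl q → hdl q = hdl r →
      MsgLt msg hdl L p q → MsgLt msg hdl L q r → MsgLt msg hdl L p r) := by
  have irrefl : ∀ x, ¬ L x x := hL.irrefl
  have htrans : ∀ {a b c}, L a b → L b c → L a c := fun h1 h2 => hL.trans _ _ _ h1 h2
  have tri : ∀ a b : X, L a b ∨ a = b ∨ L b a := fun a b => (em (L a b)).elim Or.inl fun h1 => (em (L b a)).elim (fun h2 => Or.inr (Or.inr h2)) fun h2 => Or.inr (Or.inl (hL.trichotomous a b h1 h2))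
  -- not both directions
  have notboth : ∀ p q : M, MsgLt msg hdl L p q → ¬ MsgLt msg hdl L q p := by
    intro p q h1 h2
    obtain ⟨e, he⟩ := hsurj p
    obtain ⟨f, hf⟩ := hsurj q
    exact irrefl e (htrans (h1.2.2 e f he hf) (h2.2.2 f e hf he))
  have total : ∀ p q : M, p ≠ q → hdl p = hdl q →
      MsgLt msg hdl L p q ∨ MsgLt msg hdl L q p := by
    intro p q hne hh
    by_cases hpq : MsgLt msg hdl L p q
    · exact Or.inl hpq
    · right
      refine ⟨hne.symm, hh.symm, ?_⟩
      -- there exist e (of p) and e' (of q) with ¬ L e e', hence L e' e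
      have : ∃ e e', msg e = p ∧ msg e' = q ∧ L e' e := by
        by_contra hcon
        push_neg at hcon
        apply hpq
        refine ⟨hne, hh, fun e e' he he' => ?_⟩
        rcases tri e e' with h | h | h
        · exact h
        · exact absurd (he ▸ he' ▸ congrArg msg h) hne
        · exact absurd h (hcon e e' he he')
      obtain ⟨e, e', he, he', hee⟩ := this
      -- show every event f of q precedes every event g of p
      intro f g hf hg
      rcases tri f g with h | h | h
      · exact h
      · exact absurd (hf ▸ hg ▸ congrArg msg h) hne.symm
      · -- L g f : g in p, f in q; derive contradiction
        exfalso
        have hne' : msg g ≠ msg e' := by rw [hg, he']; exact hne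
        have hne'' : msg e' ≠ msg g := fun h' => hne' h'.symm
        -- serialized on e1 = e', e2 = f (message q), e' := g
        have h1 := hser e' f g (by rw [he', hf]) (by rw [hg, he']; exact hne)
          (by rw [hg, he']; exact hh)
        -- hence ¬ L e' g, so L g e' (or eq, impossible)
        have hge' : L g e' := by
          rcases tri g e' with h2 | h2 | h2
          · exact h2
          · exact absurd (congrArg msg h2) hne'
          · exact absurd ⟨h2, h⟩ h1
        -- serialized on e1 = g, e2 = e (message p), e' := e'
        exact hser g e e' (by rw [hg, he]) (by rw [he', hg]; exact hne.symm)
          (by rw [he', hg]; exact hh.symm) ⟨hge', hee⟩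
  constructor
  · intro p q hne hh
    rcases total p q hne hh with h | h
    · exact Or.inl ⟨h, notboth p q h⟩
    · exact Or.inr ⟨h, notboth q p h⟩
  · intro p q r hpq hqr h1 h2
    have hpr : p ≠ r := by
      rintro rfl
      exact notboth p q h1 h2
    refine ⟨hpr, hpq.trans hqr, fun e e' he he' => ?_⟩
    obtain ⟨f, hf⟩ := hsurj q
    exact htrans (h1.2.2 e f he hf) (h2.2.2 f e' hf he')
end
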